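/- For all x, y ∈ K, the determinant of the 3×3 matrix over K with rows (x, y, 1), (x^q, y^q, 1), (x^{q²}, y^{q²}, 1) equals Tr(x·y^q − x^q·y). Moreover, writing x = x₀ + x₁τ + x₂τ² and y = y₀ + y₁τ + y₂τ² with xᵢ, yᵢ ∈ F, one has Tr(x·y^q − x^q·y) = β·(x₁y₂ − x₂y₁), where β = Tr(τ^{2q+1} − τ^{q+2}), and β ≠ 0. Consequently the three vectors (x, y, 1), (x^q, y^q, 1), (x^{q²}, y^{q²}, 1) are K-linearly dependent if and only if x₁y₂ = x₂y₁. -/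

import Mathlib

open Module

noncomputable section

/-- The ambient 9-dimensional space `V = K³` (an `F`-space when `K` is an `F`-algebra). -/
abbrev VK (K : Type*) := K × K × K

/-- The semilinear map `σ(x,y,z) = (z^q, x^q, y^q)` of `V = K³`. -/
def sig (q : ℕ) {K : Type*} [Field K] (v : VK K) : VK K :=
  (v.2.2 ^ q, v.1 ^ q, v.2.1 ^ q)

/-- The S-plane through `v`, i.e. the 3-dimensional `F`-subspace `K·v`. -/
def Splane (F : Type*) [Field F] {K : Type*} [Field K] [Algebra F K]
    (v : VK K) : Submodule F (VK K) :=
  Submodule.restrictScalars F (Submodule.span K {v})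

/-- `[v]` is a fixed point: `σ(v) ∈ F·v`. -/
def IsFixedPt (F : Type*) [Field F] {K : Type*} [Field K] [Algebra F K]
    (q : ℕ) (v : VK K) : Prop :=
  sig q v ∈ Submodule.span F {v}

/-- `[v]` has collinear orbit: the `F`-span of `{v, σv, σ²v}` is 2-dimensional. -/
def Collin (F : Type*) [Field F] {K : Type*} [Field K] [Algebra F K]
    (q : ℕ) (v : VK K) : Prop :=
  finrank F (Submodule.span F {v, sig q v, sig q (sig q v)}) = 2

/-- `[v]` has triangle orbit: `v, σv, σ²v` are `F`-linearly independent. -/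
def Triangle (F : Type*) [Field F] {K : Type*} [Field K] [Algebra F K]
    (q : ℕ) (v : VK K) : Prop :=
  LinearIndependent F ![v, sig q v, sig q (sig q v)]

/-- The S-plane `K·v` has Type I: `σ(v) ∈ K·v`. -/
def TypeI {K : Type*} [Field K] (q : ℕ) (v : VK K) : Prop :=
  sig q v ∈ Submodule.span K {v}

/-- The S-plane `K·v` has Type II: `v, σv, σ²v` `K`-dependent but `σ(v) ∉ K·v`. -/
def TypeII {K : Type*} [Field K] (q : ℕ) (v : VK K) : Prop :=
  ¬ LinearIndependent K ![v, sig q v, sig q (sig q v)] ∧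
    sig q v ∉ Submodule.span K {v}

/-- The S-plane `K·v` has Type III: `v, σv, σ²v` are `K`-linearly independent. -/
def TypeIII {K : Type*} [Field K] (q : ℕ) (v : VK K) : Prop :=
  LinearIndependent K ![v, sig q v, sig q (sig q v)]

/-- `σ` acts on the subspace `W` as multiplication by a scalar of `F`. -/
def ScalarOn {F : Type*} [Field F] {K : Type*} [Field K] [Algebra F K]
    (q : ℕ) (W : Submodule F (VK K)) : Prop :=
  ∃ c : F, ∀ v ∈ W, sig q v = c • v

/-- A pointwise-fixed plane: 3-dimensional `F`-subspace on which `σ` acts as a scalar. -/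
def PtwisePlane {F : Type*} [Field F] {K : Type*} [Field K] [Algebra F K]
    (q : ℕ) (W : Submodule F (VK K)) : Prop :=
  finrank F W = 3 ∧ ScalarOn q W

/-- A fixed line: 2-dimensional `F`-subspace `L` with `σ(L) = L`. -/
def FixedLine {F : Type*} [Field F] {K : Type*} [Field K] [Algebra F K]
    (q : ℕ) (L : Submodule F (VK K)) : Prop :=
  finrank F L = 2 ∧ sig q '' (L : Set (VK K)) = (L : Set (VK K))

/-- A pointwise-fixed line: fixed line on which `σ` acts as a scalar. -/
def PtwiseLine {F : Type*} [Field F] {K : Type*} [Field K] [Algebra F K]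
    (q : ℕ) (L : Submodule F (VK K)) : Prop :=
  FixedLine q L ∧ ScalarOn q L

/-- A fixed-I-line: fixed line, not scalar, contained in some `K·v`. -/
def FixedILine {F : Type*} [Field F] {K : Type*} [Field K] [Algebra F K]
    (q : ℕ) (L : Submodule F (VK K)) : Prop :=
  FixedLine q L ∧ ¬ ScalarOn q L ∧ ∃ v : VK K, v ≠ 0 ∧ L ≤ Splane F v

/-- A fixed-II-line: fixed line, not scalar, contained in no `K·v`. -/
def FixedIILine {F : Type*} [Field F] {K : Type*} [Field K] [Algebra F K]
    (q : ℕ) (L : Submodule F (VK K)) : Prop :=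
  FixedLine q L ∧ ¬ ScalarOn q L ∧ ¬ ∃ v : VK K, v ≠ 0 ∧ L ≤ Splane F v

/-- A hwise-fixed-5-space: 6-dimensional `F`-subspace `W` with `σ(W) = W` such that the
map induced by `σ` on `V/W` is multiplication by a scalar. -/
def HFix5 {F : Type*} [Field F] {K : Type*} [Field K] [Algebra F K]
    (q : ℕ) (W : Submodule F (VK K)) : Prop :=
  finrank F W = 6 ∧ sig q '' (W : Set (VK K)) = (W : Set (VK K)) ∧
    ∃ c : F, ∀ v : VK K, sig q v - c • v ∈ W

/-- An `H_I`-5-space: a 2-dimensional `K`-subspace `U` of `V` with `σ(U) = U`. -/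
def HI5 {K : Type*} [Field K] (q : ℕ) (U : Submodule K (VK K)) : Prop :=
  finrank K U = 2 ∧ sig q '' (U : Set (VK K)) = (U : Set (VK K))

/-- The trace map `Tr(z) = z + z^q + z^(q²)` of `K = GF(q³)`. -/
def Trc (q : ℕ) {K : Type*} [Field K] (z : K) : K :=
  z + z ^ q + z ^ q ^ 2

/-- the determinant identity `det = Tr(x·y^q − x^q·y) = β(x₁y₂ − x₂y₁)`
with `β = Tr(τ^{2q+1} − τ^{q+2}) ≠ 0`, and the linear-dependence criterion. -/
theorem stmt19 (q : ℕ) (hq : 2 < q)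
    (F : Type*) [Field F] [Fintype F] (K : Type*) [Field K] [Fintype K]
    [Algebra F K] (hF : Fintype.card F = q) (hK : Fintype.card K = q ^ 3)
    (τ : K)
    (hτ : ∀ z : K, ∃! c : Fin 3 → F,
      z = algebraMap F K (c 0) + algebraMap F K (c 1) * τ +
        algebraMap F K (c 2) * τ ^ 2) :
    ∀ x y : K, ∀ x0 x1 x2 y0 y1 y2 : F,
      x = algebraMap F K x0 + algebraMap F K x1 * τ + algebraMap F K x2 * τ ^ 2 →
      y = algebraMap F K y0 + algebraMap F K y1 * τ + algebraMap F K y2 * τ ^ 2 →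
      Matrix.det !![x, y, 1; x ^ q, y ^ q, 1; x ^ q ^ 2, y ^ q ^ 2, 1] =
          Trc q (x * y ^ q - x ^ q * y) ∧
        Trc q (x * y ^ q - x ^ q * y) =
          Trc q (τ ^ (2 * q + 1) - τ ^ (q + 2)) * algebraMap F K (x1 * y2 - x2 * y1) ∧
        Trc q (τ ^ (2 * q + 1) - τ ^ (q + 2)) ≠ 0 ∧
        (¬ LinearIndependent K
            ![((x, y, 1) : VK K), (x ^ q, y ^ q, 1), (x ^ q ^ 2, y ^ q ^ 2, 1)] ↔
          x1 * y2 = x2 * y1) := by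
  classical
  -- characteristic setup
  have hq0 : 0 < q := by omega
  set p := ringChar F with hp_def
  haveI hFp : CharP F p := ringChar.charP F
  obtain ⟨n, hp, hcardF⟩ := FiniteField.card F p
  haveI : Fact p.Prime := ⟨hp⟩
  haveI hKp : CharP K p := charP_of_injective_algebraMap (algebraMap F K).injective p
  have hqpn : q = p ^ (n : ℕ) := by rw [← hF, hcardF]
  set φ : K →+* K := iterateFrobenius K p n with hφ_def
  have hφ : ∀ z : K, φ z = z ^ q := by
    intro z; rw [hφ_def, iterateFrobenius_def, ← hqpn]
  have hcard : ∀ z : K, z ^ q ^ 3 = z := by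
    intro z; rw [← hK]; exact FiniteField.pow_card z
  have hφ2 : ∀ z : K, φ (φ z) = z ^ q ^ 2 := by
    intro z; rw [hφ, hφ, ← pow_mul, ← pow_two]
  have hφ3 : ∀ z : K, φ (φ (φ z)) = z := by
    intro z
    rw [hφ, hφ, hφ, ← pow_mul, ← pow_mul, show q * (q * q) = q ^ 3 from by ring]
    exact hcard z
  have hfixF : ∀ c : F, φ (algebraMap F K c) = algebraMap F K c := by
    intro c
    rw [hφ, ← map_pow, ← hF, FiniteField.pow_card]
  -- basis conjugates
  set B : K := τ ^ q with hB_def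
  set C : K := τ ^ q ^ 2 with hC_def
  have hφA : φ τ = B := hφ τ
  have hφB : φ B = C := by rw [hB_def, ← hφ τ, hφ2]
  have hφC : φ C = τ := by rw [hC_def, ← hφ2 τ, hφ3]
  -- tau^q ≠ tau
  have hBA : B ≠ τ := by
    intro hBAeq
    have hrange : τ ∈ Set.range (algebraMap F K) := by
      by_contra hz'
      set P : Polynomial K := Polynomial.X ^ q - Polynomial.X with hP_def
      have hdeg : P.natDegree = q := by
        rw [hP_def]
        rw [Polynomial.natDegree_sub_eq_left_of_natDegree_lt] <;>
          simp [Polynomial.natDegree_X_pow] <;> omega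
      have hP0 : P ≠ 0 := by
        intro h0
        rw [h0, Polynomial.natDegree_zero] at hdeg; omega
      have hmem : ∀ z : K, z ^ q = z → z ∈ P.roots.toFinset := by
        intro z hz
        rw [Multiset.mem_toFinset, Polynomial.mem_roots hP0]
        simp [hP_def, Polynomial.IsRoot, hz]
      have himg : (Finset.univ.image (algebraMap F K)) ⊆ P.roots.toFinset := by
        intro z hz
        obtain ⟨c, _, rfl⟩ := Finset.mem_image.mp hz
        apply hmem
        rw [← map_pow, ← hF, FiniteField.pow_card]
      have hins : insert τ (Finset.univ.image (algebraMap F K)) ⊆ P.roots.toFinset := by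
        apply Finset.insert_subset _ himg
        apply hmem
        rw [← hB_def, hBAeq]
      have hAnot : τ ∉ Finset.univ.image (algebraMap F K) := by
        intro h
        obtain ⟨c, _, hc⟩ := Finset.mem_image.mp h
        exact hz' ⟨c, hc⟩
      have hcard1 : (insert τ (Finset.univ.image (algebraMap F K))).card = q + 1 := by
        rw [Finset.card_insert_of_notMem hAnot,
          Finset.card_image_of_injective _ (algebraMap F K).injective,
          Finset.card_univ, hF]
      have hle : q + 1 ≤ P.roots.toFinset.card := by
        rw [← hcard1]; exact Finset.card_le_card hins
      have h1 := Multiset.toFinset_card_le P.roots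
      have h2 := P.card_roots' 
      omega
    obtain ⟨c, hc⟩ := hrange
    have h1 : τ = algebraMap F K ((![c, 0, 0] : Fin 3 → F) 0) +
        algebraMap F K ((![c, 0, 0] : Fin 3 → F) 1) * τ +
        algebraMap F K ((![c, 0, 0] : Fin 3 → F) 2) * τ ^ 2 := by
      simp [hc]
    have h2 : τ = algebraMap F K ((![0, 1, 0] : Fin 3 → F) 0) +
        algebraMap F K ((![0, 1, 0] : Fin 3 → F) 1) * τ +
        algebraMap F K ((![0, 1, 0] : Fin 3 → F) 2) * τ ^ 2 := by
      simp
    have := ((hτ τ).unique h1 h2)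
    have h01 : (![c, 0, 0] : Fin 3 → F) 1 = (![0, 1, 0] : Fin 3 → F) 1 := by rw [this]
    simp at h01
  have hφinj : Function.Injective φ := φ.injective
  have hCB : C ≠ B := by
    intro h
    exact hBA (hφinj (by rw [hφB, hφA, h]))
  have hCA : C ≠ τ := by
    intro h
    apply hBA
    have h2 := congrArg φ h
    rw [hφC, hφA] at h2
    exact h2.symm
  -- beta
  have hτ21 : τ ^ (2 * q + 1) = τ * B ^ 2 := by
    rw [hB_def, ← pow_mul, ← pow_succ']
    congr 1 <;> omega
  have hτ12 : τ ^ (q + 2) = τ ^ 2 * B := by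
    rw [hB_def, ← pow_add]
    congr 1 <;> omega
  have hβ : Trc q (τ ^ (2 * q + 1) - τ ^ (q + 2)) =
      (τ * B ^ 2 - τ ^ 2 * B) + (B * C ^ 2 - B ^ 2 * C) + (C * τ ^ 2 - C ^ 2 * τ) := by
    show (τ ^ (2 * q + 1) - τ ^ (q + 2)) + (τ ^ (2 * q + 1) - τ ^ (q + 2)) ^ q
        + (τ ^ (2 * q + 1) - τ ^ (q + 2)) ^ q ^ 2 = _
    rw [← hφ (τ ^ (2 * q + 1) - τ ^ (q + 2)), ← hφ2 (τ ^ (2 * q + 1) - τ ^ (q + 2)),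
      hτ21, hτ12]
    simp only [map_sub, map_mul, map_pow, hφA, hφB, hφC]
    try ring
  have hβfac : Trc q (τ ^ (2 * q + 1) - τ ^ (q + 2)) = (B - τ) * (C - τ) * (C - B) := by
    rw [hβ]; ring
  have hβne : Trc q (τ ^ (2 * q + 1) - τ ^ (q + 2)) ≠ 0 := by
    rw [hβfac]
    exact mul_ne_zero (mul_ne_zero (sub_ne_zero.mpr hBA) (sub_ne_zero.mpr hCA))
      (sub_ne_zero.mpr hCB)
  intro x y x0 x1 x2 y0 y1 y2 hx hy
  -- Frobenius conjugates of x and y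
  have hxq : x ^ q = algebraMap F K x0 + algebraMap F K x1 * B + algebraMap F K x2 * B ^ 2 := by
    rw [← hφ x, hx]
    simp only [map_add, map_mul, map_pow, hfixF, hφA]
  have hxq2 : x ^ q ^ 2 = algebraMap F K x0 + algebraMap F K x1 * C
      + algebraMap F K x2 * C ^ 2 := by
    rw [← hφ2 x, hx]
    simp only [map_add, map_mul, map_pow, hfixF, hφA, hφB]
  have hyq : y ^ q = algebraMap F K y0 + algebraMap F K y1 * B + algebraMap F K y2 * B ^ 2 := by
    rw [← hφ y, hy]
    simp only [map_add, map_mul, map_pow, hfixF, hφA]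
  have hyq2 : y ^ q ^ 2 = algebraMap F K y0 + algebraMap F K y1 * C
      + algebraMap F K y2 * C ^ 2 := by
    rw [← hφ2 y, hy]
    simp only [map_add, map_mul, map_pow, hfixF, hφA, hφB]
  -- the trace as a sum of six products
  have hTr : Trc q (x * y ^ q - x ^ q * y) =
      (x * y ^ q - x ^ q * y) + (x ^ q * y ^ q ^ 2 - x ^ q ^ 2 * y ^ q)
        + (x ^ q ^ 2 * y - x * y ^ q ^ 2) := by
    show (x * y ^ q - x ^ q * y) + (x * y ^ q - x ^ q * y) ^ q
        + (x * y ^ q - x ^ q * y) ^ q ^ 2 = _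
    have e1 : φ (x ^ q) = x ^ q ^ 2 := by rw [hφ (x ^ q), ← pow_mul, ← pow_two]
    have e2 : φ (y ^ q) = y ^ q ^ 2 := by rw [hφ (y ^ q), ← pow_mul, ← pow_two]
    have e3 : φ (x ^ q ^ 2) = x := by rw [← hφ2 x, hφ3]
    have e4 : φ (y ^ q ^ 2) = y := by rw [← hφ2 y, hφ3]
    have e5 : φ x = x ^ q := hφ x
    have e6 : φ y = y ^ q := hφ y
    rw [← hφ (x * y ^ q - x ^ q * y), ← hφ2 (x * y ^ q - x ^ q * y)]
    simp only [map_sub, map_mul, e5, e6, e1, e2, e3, e4]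
    try ring
  have hdet : Matrix.det !![x, y, 1; x ^ q, y ^ q, 1; x ^ q ^ 2, y ^ q ^ 2, 1] =
      Trc q (x * y ^ q - x ^ q * y) := by
    rw [hTr]
    simp [Matrix.det_fin_three, Matrix.vecHead, Matrix.vecTail]
    try ring
  have hmain : Trc q (x * y ^ q - x ^ q * y) =
      Trc q (τ ^ (2 * q + 1) - τ ^ (q + 2)) * algebraMap F K (x1 * y2 - x2 * y1) := by
    rw [hTr, hβ, hxq, hxq2, hyq, hyq2, hx, hy, map_sub, map_mul, map_mul]
    ring
  refine ⟨hdet, hmain, hβne, ?_⟩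
  -- linear independence criterion
  set M : Matrix (Fin 3) (Fin 3) K :=
    !![x, y, 1; x ^ q, y ^ q, 1; x ^ q ^ 2, y ^ q ^ 2, 1] with hM_def
  let f : VK K →ₗ[K] (Fin 3 → K) :=
    { toFun := fun v => ![v.1, v.2.1, v.2.2]
      map_add' := by intro a b; funext i; fin_cases i <;> simp
      map_smul' := by intro c a; funext i; fin_cases i <;> simp }
  have hker : LinearMap.ker f = ⊥ := by
    rw [LinearMap.ker_eq_bot']
    intro v hv
    have h0 := congr_fun hv 0
    have h1 := congr_fun hv 1
    have h2 := congr_fun hv 2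
    simp only [f, LinearMap.coe_mk, AddHom.coe_mk] at h0 h1 h2
    simp only [Matrix.cons_val_zero, Matrix.cons_val_one, Matrix.head_cons] at h0 h1 h2
    exact Prod.ext (by simpa using h0) (Prod.ext (by simpa using h1) (by simpa using h2))
  have hcomp : (f ∘ ![((x, y, 1) : VK K), (x ^ q, y ^ q, 1), (x ^ q ^ 2, y ^ q ^ 2, 1)]) =
      (fun i => M i) := by
    funext i
    fin_cases i <;> (funext j; fin_cases j <;> simp [f, hM_def, Matrix.vecHead, Matrix.vecTail])
  have hLI : LinearIndependent K
      ![((x, y, 1) : VK K), (x ^ q, y ^ q, 1), (x ^ q ^ 2, y ^ q ^ 2, 1)] ↔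
      LinearIndependent K (fun i => M i) := by
    rw [← (f.linearIndependent_iff hker), hcomp]
  rw [hLI, ← Matrix.row_def, Matrix.linearIndependent_rows_iff_isUnit, Matrix.isUnit_iff_isUnit_det,
    isUnit_iff_ne_zero, not_not, hdet, hmain]
  constructor
  · intro h
    rcases mul_eq_zero.mp h with h' | h'
    · exact absurd h' hβne
    · have : x1 * y2 - x2 * y1 = 0 := by
        apply (algebraMap F K).injective
        rw [h', map_zero]
      exact sub_eq_zero.mp this
  · intro h
    have : x1 * y2 - x2 * y1 = 0 := by rw [h]; ring
    rw [this, map_zero, mul_zero]
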